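/- Consider a K-armed stochastic bandit whose arms have i.i.d. rewards in [0,1] with means μ_1, …, μ_K, optimal mean μ* = max_j μ_j, and gaps Δ_j = μ* − μ_j. Run the UCB1 policy: first play each arm once; then at each subsequent round t, play an arm maximizing the index x̄_j(t) + sqrt(2 ln t / N_j(t)). Then the cumulative regret satisfies R_n ≤ Σ_{j : Δ_j > 0} ( 8 ln n / Δ_j + (1 + π²/3)·Δ_j ) for all n ≥ K, and consequently lim_{n→∞} R_n / n = 0, i.e., the UCB1 selection strategy is asymptotically optimal. -/

import Mathlib

open MeasureTheory ProbabilityTheory Filter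

lemma ucb_integrable_of_bounded {Ω : Type*} [MeasurableSpace Ω] {P : Measure Ω}
    [IsProbabilityMeasure P] {f : Ω → ℝ} (hf : Measurable f) (C : ℝ)
    (h : ∀ ω, |f ω| ≤ C) : Integrable f P := by
  refine Integrable.mono' (integrable_const C) hf.aestronglyMeasurable ?_
  exact ae_of_all _ fun ω => by simpa [Real.norm_eq_abs] using h ω

lemma ucb_log_bound {p : ℝ} (hp0 : 0 ≤ p) (hp1 : p ≤ 1) {u : ℝ} (hu : 0 ≤ u) :
    Real.log (1 - p + p * Real.exp u) ≤ p * u + u ^ 2 / 8 := by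
  have hDpos : ∀ x : ℝ, 0 < 1 - p + p * Real.exp x := by
    intro x
    rcases le_total 1 (Real.exp x) with h | h
    · nlinarith [Real.exp_pos x]
    · nlinarith [Real.exp_pos x]
  set q : ℝ → ℝ := fun x => p * Real.exp x / (1 - p + p * Real.exp x) with hqdef
  have hq0 : ∀ x, 0 ≤ q x := fun x => by
    have := (hDpos x).le
    simp only [hqdef]
    positivity
  have hq1 : ∀ x, q x ≤ 1 := by
    intro x
    simp only [hqdef]
    rw [div_le_one (hDpos x)]
    nlinarith [Real.exp_pos x]
  have hDderiv : ∀ x : ℝ, HasDerivAt (fun y => 1 - p + p * Real.exp y) (p * Real.exp x) x := by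
    intro x
    simpa using ((Real.hasDerivAt_exp x).const_mul p).const_add (1 - p)
  have hqderiv : ∀ x, HasDerivAt q (q x * (1 - q x)) x := by
    intro x
    have h := (((Real.hasDerivAt_exp x).const_mul p).div (hDderiv x) (hDpos x).ne')
    refine h.congr_deriv ?_
    have h2 := (hDpos x).ne'
    simp only [hqdef]
    field_simp
  have hqle : ∀ x, 0 ≤ x → q x ≤ p + x / 4 := by
    intro x hx
    have hg : ∀ y : ℝ, HasDerivAt (fun z => p + z / 4 - q z) (1 / 4 - q y * (1 - q y)) y := by
      intro y
      exact (((hasDerivAt_id y).div_const 4).const_add p).sub (hqderiv y)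
    have hmono : Monotone (fun z => p + z / 4 - q z) := by
      apply monotone_of_deriv_nonneg
      · exact fun y => ((hg y).differentiableAt)
      · intro y
        rw [(hg y).deriv]
        nlinarith [sq_nonneg (q y - 1/2)]
    have h0 : q 0 = p := by simp [hqdef]
    have := hmono hx
    simp only [h0] at this
    linarith [this]
  -- step 2
  have hhderiv : ∀ y : ℝ, HasDerivAt
      (fun z => p * z + z ^ 2 / 8 - Real.log (1 - p + p * Real.exp z))
      (p + y / 4 - q y) y := by
    intro y
    have hlog : HasDerivAt (fun z => Real.log (1 - p + p * Real.exp z)) (q y) y := by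
      have := (hDderiv y).log (hDpos y).ne'
      simpa [hqdef] using this
    have hpoly : HasDerivAt (fun z : ℝ => p * z + z ^ 2 / 8) (p + y / 4) y := by
      have h1 : HasDerivAt (fun z : ℝ => p * z) p y := by
        simpa using (hasDerivAt_id y).const_mul p
      have h2 : HasDerivAt (fun z : ℝ => z ^ 2 / 8) (y / 4) y := by
        have := (hasDerivAt_pow 2 y).div_const 8
        refine this.congr_deriv ?_
        push_cast
        ring
      exact h1.add h2
    exact hpoly.sub hlog
  have hmono2 : MonotoneOn (fun z => p * z + z ^ 2 / 8 - Real.log (1 - p + p * Real.exp z))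
      (Set.Ici (0:ℝ)) := by
    apply monotoneOn_of_deriv_nonneg (convex_Ici 0)
    · exact Continuous.continuousOn (by
        fun_prop (disch := intro x; exact (hDpos x).ne'))
    · intro y hy
      exact ((hhderiv y).differentiableAt).differentiableWithinAt
    · intro y hy
      rw [(hhderiv y).deriv]
      have : q y ≤ p + y / 4 := hqle y (le_of_lt (by simpa using hy))
      linarith
  have h0 : (fun z => p * z + z ^ 2 / 8 - Real.log (1 - p + p * Real.exp z)) 0 = 0 := by
    norm_num
  have := hmono2 (Set.self_mem_Ici) (Set.mem_Ici.mpr hu) hu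
  rw [h0] at this
  linarith [this]

lemma ucb_mgf_bound {Ω : Type*} [MeasurableSpace Ω] (P : Measure Ω) [IsProbabilityMeasure P]
    {Y : Ω → ℝ} (hmeas : Measurable Y) (hrange : ∀ ω, Y ω ∈ Set.Icc (0:ℝ) 1)
    {lam : ℝ} (hlam : 0 ≤ lam) :
    ∫ ω, Real.exp (lam * (Y ω - ∫ ω', Y ω' ∂P)) ∂P ≤ Real.exp (lam ^ 2 / 8) := by
  set m : ℝ := ∫ ω', Y ω' ∂P with hm
  have hYint : Integrable Y P :=
    ucb_integrable_of_bounded hmeas 1 (fun ω => abs_le.2 ⟨by linarith [(hrange ω).1], (hrange ω).2⟩)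
  have hm0 : 0 ≤ m := integral_nonneg fun ω => (hrange ω).1
  have hm1 : m ≤ 1 := by
    calc m ≤ ∫ _, (1:ℝ) ∂P := integral_mono hYint (integrable_const 1) fun ω => (hrange ω).2
    _ = 1 := by simp
  -- pointwise convexity bound
  have hconv : ∀ ω, Real.exp (lam * Y ω) ≤ 1 - Y ω + Y ω * Real.exp lam := by
    intro ω
    obtain ⟨h0, h1⟩ := hrange ω
    have := convexOn_exp.2 (Set.mem_univ (0:ℝ)) (Set.mem_univ lam)
      (by linarith : (0:ℝ) ≤ 1 - Y ω) h0 (by ring)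
    simpa [mul_comm] using this
  have hintexp : Integrable (fun ω => Real.exp (lam * Y ω)) P := by
    apply ucb_integrable_of_bounded (by fun_prop) (Real.exp lam)
    intro ω
    rw [abs_of_pos (Real.exp_pos _), Real.exp_le_exp]
    exact mul_le_of_le_one_right hlam (hrange ω).2
  have key : ∫ ω, Real.exp (lam * Y ω) ∂P ≤ 1 - m + m * Real.exp lam := by
    calc ∫ ω, Real.exp (lam * Y ω) ∂P
        ≤ ∫ ω, (1 - Y ω + Y ω * Real.exp lam) ∂P := by
          apply integral_mono hintexp ?_ hconv
          exact ((integrable_const 1).sub hYint).add (hYint.mul_const _)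
      _ = 1 - m + m * Real.exp lam := by
          have h1 : ∫ ω, (1 - Y ω + Y ω * Real.exp lam) ∂P
              = (∫ ω, (1 - Y ω) ∂P) + ∫ ω, Y ω * Real.exp lam ∂P :=
            integral_add ((integrable_const 1).sub hYint) (hYint.mul_const _)
          have h2 : ∫ ω, (1 - Y ω) ∂P = 1 - m :=
            by rw [integral_sub (integrable_const 1) hYint]; simp [hm]
          have h3 : ∫ ω, Y ω * Real.exp lam ∂P = m * Real.exp lam := by
            rw [integral_mul_const]
          rw [h1, h2, h3]
  have hpos : (0:ℝ) < 1 - m + m * Real.exp lam := by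
    rcases le_total 1 (Real.exp lam) with h | h
    · nlinarith [Real.exp_pos lam]
    · nlinarith [Real.exp_pos lam]
  have hlog : Real.log (1 - m + m * Real.exp lam) ≤ m * lam + lam ^ 2 / 8 :=
    ucb_log_bound hm0 hm1 hlam
  calc ∫ ω, Real.exp (lam * (Y ω - m)) ∂P
      = Real.exp (-(lam * m)) * ∫ ω, Real.exp (lam * Y ω) ∂P := by
        rw [← integral_const_mul]
        congr 1 with ω
        rw [← Real.exp_add]
        ring_nf
    _ ≤ Real.exp (-(lam * m)) * (1 - m + m * Real.exp lam) := by
        exact mul_le_mul_of_nonneg_left key (Real.exp_pos _).le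
    _ = Real.exp (-(lam * m) + Real.log (1 - m + m * Real.exp lam)) := by
        rw [Real.exp_add, Real.exp_log hpos]
    _ ≤ Real.exp (lam ^ 2 / 8) := by
        rw [Real.exp_le_exp]
        linarith [hlog]

lemma ucb_iIndepFun_precomp {Ω ι κ : Type*} [MeasurableSpace Ω] {P : Measure Ω}
    {β : Type*} [mβ : MeasurableSpace β] {f : ι → Ω → β}
    (hf : iIndepFun f P) {g : κ → ι} (hg : Function.Injective g) :
    iIndepFun (fun k => f (g k)) P := by
  classical
  rw [iIndepFun_iff_measure_inter_preimage_eq_mul] at hf ⊢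
  intro S sets H
  have key := hf (S.image g)
    (sets := Function.extend g sets fun _ => Set.univ) ?_
  · have h1 : (⋂ i ∈ S.image g, f i ⁻¹' Function.extend g sets (fun _ => Set.univ) i)
        = ⋂ k ∈ S, f (g k) ⁻¹' sets k := by
      ext ω
      simp only [Set.mem_iInter, Finset.mem_image]
      constructor
      · intro h k hk
        have := h (g k) ⟨k, hk, rfl⟩
        rwa [hg.extend_apply] at this
      · rintro h i ⟨k, hk, rfl⟩
        rw [hg.extend_apply]
        exact h k hk
    have h2 : ∏ i ∈ S.image g, P (f i ⁻¹' Function.extend g sets (fun _ => Set.univ) i)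
        = ∏ k ∈ S, P (f (g k) ⁻¹' sets k) := by
      rw [Finset.prod_image (fun a _ b _ hab => hg hab)]
      exact Finset.prod_congr rfl fun k _ => by rw [hg.extend_apply]
    rw [h1, h2] at key
    exact key
  · rintro i hi
    rcases Finset.mem_image.1 hi with ⟨k, hk, rfl⟩
    rw [hg.extend_apply]
    exact H k hk

-- Lemma C : Hoeffding tail bound for sums of independent [0,1] variables

lemma ucb_hoeffding_tail {Ω : Type*} [MeasurableSpace Ω] (P : Measure Ω)
    [IsProbabilityMeasure P] (Y : ℕ → Ω → ℝ) (hmeas : ∀ u, Measurable (Y u))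
    (hrange : ∀ u ω, Y u ω ∈ Set.Icc (0:ℝ) 1)
    (hindep : iIndepFun Y P)
    (m : ℝ) (hm : ∀ u, ∫ ω, Y u ω ∂P = m)
    (s : ℕ) {c : ℝ} (hc : 0 ≤ c) :
    (P {ω | (s:ℝ) * (m + c) ≤ ∑ u ∈ Finset.range s, Y u ω}).toReal
      ≤ Real.exp (-(2 * s * c ^ 2)) := by
  classical
  set Z : ℕ → Ω → ℝ := fun u ω => Y u ω - m with hZ
  have hZmeas : ∀ u, Measurable (Z u) := fun u => (hmeas u).sub measurable_const
  have hZindep : iIndepFun Z P := by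
    have := hindep.comp (fun _ (x : ℝ) => x - m) (fun _ => measurable_id.sub measurable_const)
    exact this
  have hm01 : 0 ≤ m ∧ m ≤ 1 := by
    constructor
    · rw [← hm 0]; exact integral_nonneg fun ω => (hrange 0 ω).1
    · rw [← hm 0]
      calc ∫ ω, Y 0 ω ∂P ≤ ∫ _, (1:ℝ) ∂P := by
            apply integral_mono _ (integrable_const 1) fun ω => (hrange 0 ω).2
            exact ucb_integrable_of_bounded (hmeas 0) 1
              (fun ω => abs_le.2 ⟨by linarith [(hrange 0 ω).1], (hrange 0 ω).2⟩)
        _ = 1 := by simp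
  -- the sum as a single function
  have hset : {ω | (s:ℝ) * (m + c) ≤ ∑ u ∈ Finset.range s, Y u ω}
      = {ω | (s:ℝ) * c ≤ (∑ u ∈ Finset.range s, Z u) ω} := by
    ext ω
    simp only [Set.mem_setOf_eq, Finset.sum_apply, hZ, Finset.sum_sub_distrib,
      Finset.sum_const, Finset.card_range, nsmul_eq_mul]
    constructor <;> intro h <;> nlinarith
  have hintexp : ∀ (t : ℝ) (u : ℕ), u ∈ Finset.range s →
      Integrable (fun ω => Real.exp (t * Z u ω)) P := by
    intro t u _
    apply ucb_integrable_of_bounded (by fun_prop) (Real.exp (|t| * (1 + |m|)))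
    intro ω
    rw [abs_of_pos (Real.exp_pos _), Real.exp_le_exp]
    calc t * Z u ω ≤ |t * Z u ω| := le_abs_self _
      _ = |t| * |Y u ω - m| := by rw [abs_mul]
      _ ≤ |t| * (1 + |m|) := by
          apply mul_le_mul_of_nonneg_left _ (abs_nonneg t)
          have h1 := (hrange u ω).1; have h2 := (hrange u ω).2
          rw [abs_le]; constructor <;> [skip; skip] <;> cases abs_cases m <;> linarith
  set lam : ℝ := 4 * c with hlam
  have hlam0 : 0 ≤ lam := by positivity
  have hZsum_int : Integrable (fun ω => Real.exp (lam * (∑ u ∈ Finset.range s, Z u) ω)) P :=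
    hZindep.integrable_exp_mul_sum hZmeas (hintexp lam)
  have hcher := measure_ge_le_exp_mul_mgf (μ := P) (X := ∑ u ∈ Finset.range s, Z u)
    ((s:ℝ) * c) hlam0 hZsum_int
  rw [hset]
  refine hcher.trans ?_
  have hmgf : mgf (∑ u ∈ Finset.range s, Z u) P lam ≤ Real.exp (s * (lam ^ 2 / 8)) := by
    rw [hZindep.mgf_sum hZmeas]
    calc ∏ u ∈ Finset.range s, mgf (Z u) P lam
        ≤ ∏ u ∈ Finset.range s, Real.exp (lam ^ 2 / 8) := by
          apply Finset.prod_le_prod (fun u _ => mgf_nonneg)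
          intro u _
          have := ucb_mgf_bound P (hmeas u) (hrange u) hlam0
          rw [hm u] at this
          exact this
      _ = Real.exp (s * (lam ^ 2 / 8)) := by
          rw [Finset.prod_const, Finset.card_range, ← Real.exp_nat_mul]
  calc Real.exp (-lam * ((s:ℝ) * c)) * mgf (∑ u ∈ Finset.range s, Z u) P lam
      ≤ Real.exp (-lam * ((s:ℝ) * c)) * Real.exp (s * (lam ^ 2 / 8)) :=
        mul_le_mul_of_nonneg_left hmgf (Real.exp_pos _).le
    _ = Real.exp (-lam * ((s:ℝ) * c) + s * (lam ^ 2 / 8)) := (Real.exp_add _ _).symm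
    _ ≤ Real.exp (-(2 * s * c ^ 2)) := by
        rw [Real.exp_le_exp, hlam]
        have : (0:ℝ) ≤ s := Nat.cast_nonneg s
        nlinarith

lemma ucb_tele (n : ℕ) (hn : 1 ≤ n) :
    ∑ t ∈ Finset.Icc 2 n, (1:ℝ)/((t:ℝ)*((t:ℝ)-1)) = 1 - 1/(n:ℝ) := by
  induction n with
  | zero => omega
  | succ n ih =>
    rcases Nat.lt_or_ge n 1 with h | h
    · interval_cases n
      · simp
    · rw [Finset.sum_Icc_succ_top (by omega : 2 ≤ n + 1), ih h]
      have h1 : (1:ℝ) ≤ (n:ℝ) := by exact_mod_cast h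
      have h2 : (n:ℝ) ≠ 0 := by positivity
      have h3 : ((n:ℝ)+1) ≠ 0 := by positivity
      push_cast
      field_simp
      rw [add_sub_cancel_right]
      field_simp
      ring

lemma ucb_tail_sum (K n : ℕ) (hK : 1 ≤ K) :
    ∑ t ∈ Finset.Ioc K n, ((t - 1 : ℕ) : ℝ) * (2 / (t:ℝ) ^ 4) ≤ 2 := by
  rcases Nat.lt_or_ge n 2 with h | h
  · -- sum over Ioc K n is over t ≤ n < 2, each t ≥ K+1 ≥ 2 : empty
    have : Finset.Ioc K n = ∅ ∨ True := Or.inr trivial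
    have hsub : ∀ t ∈ Finset.Ioc K n, ((t - 1 : ℕ) : ℝ) * (2 / (t:ℝ) ^ 4)
        ≤ (1:ℝ)/((t:ℝ)*((t:ℝ)-1)) * 2 := by
      intro t ht
      simp only [Finset.mem_Ioc] at ht
      omega
    calc ∑ t ∈ Finset.Ioc K n, ((t - 1 : ℕ) : ℝ) * (2 / (t:ℝ) ^ 4)
        ≤ ∑ t ∈ Finset.Ioc K n, (0:ℝ) := by
          apply Finset.sum_le_sum
          intro t ht
          simp only [Finset.mem_Ioc] at ht
          omega
      _ ≤ 2 := by simp
  · have hn1 : 1 ≤ n := by omega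
    have hterm : ∀ t ∈ Finset.Ioc K n, ((t - 1 : ℕ) : ℝ) * (2 / (t:ℝ) ^ 4)
        ≤ 2 * ((1:ℝ)/((t:ℝ)*((t:ℝ)-1))) := by
      intro t ht
      simp only [Finset.mem_Ioc] at ht
      have ht2 : 2 ≤ t := by omega
      have h1 : (2:ℝ) ≤ (t:ℝ) := by exact_mod_cast ht2
      have hc : ((t - 1 : ℕ) : ℝ) = (t:ℝ) - 1 := by
        push_cast [Nat.cast_sub (by omega : 1 ≤ t)]; ring
      have hden : (0:ℝ) < (t:ℝ)*((t:ℝ)-1) := by nlinarith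
      rw [hc, mul_div_assoc', mul_one_div, div_le_div_iff₀ (by positivity) hden]
      have e1 : ((t:ℝ)-1)^2 ≤ (t:ℝ)^2 := by nlinarith
      have e2 : (t:ℝ)^2 ≤ (t:ℝ)^3 := by nlinarith
      nlinarith [e1, e2]
    calc ∑ t ∈ Finset.Ioc K n, ((t - 1 : ℕ) : ℝ) * (2 / (t:ℝ) ^ 4)
        ≤ ∑ t ∈ Finset.Ioc K n, 2 * ((1:ℝ)/((t:ℝ)*((t:ℝ)-1))) := Finset.sum_le_sum hterm
      _ ≤ ∑ t ∈ Finset.Icc 2 n, 2 * ((1:ℝ)/((t:ℝ)*((t:ℝ)-1))) := by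
          apply Finset.sum_le_sum_of_subset_of_nonneg
          · intro t ht
            simp only [Finset.mem_Ioc] at ht
            simp only [Finset.mem_Icc]
            omega
          · intro t ht _
            simp only [Finset.mem_Icc] at ht
            have h1 : (2:ℝ) ≤ (t:ℝ) := by exact_mod_cast ht.1
            have : (0:ℝ) ≤ (t:ℝ)*((t:ℝ)-1) := by nlinarith
            positivity
      _ = 2 * (1 - 1/(n:ℝ)) := by rw [← Finset.mul_sum, ucb_tele n hn1]
      _ ≤ 2 := by
          have : (0:ℝ) < (n:ℝ) := by exact_mod_cast hn1
          have : 0 ≤ 1/(n:ℝ) := by positivity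
          linarith

/-- **UCB1 is asymptotically optimal.**
Consider a `K`-armed stochastic bandit whose arms have i.i.d. rewards in `[0,1]`
with means `μ 1, …, μ K`, optimal mean `μ* = max_j μ j`, and gaps `Δ j = μ* - μ j`.
Run the UCB1 policy: first play each arm once; then at each subsequent round `t`,
play an arm maximizing the index `x̄ j t + √(2 ln t / N j (t-1))`.  Then the
cumulative regret satisfies
`R n ≤ Σ_{j : Δ j > 0} (8 ln n / Δ j + (1 + π²/3)·Δ j)` for all `n ≥ K`, and
consequently `R n / n → 0` as `n → ∞`, i.e. UCB1 is asymptotically optimal. -/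
theorem ucb1_asymptotically_optimal
    {Ω : Type*} [MeasurableSpace Ω] (P : Measure Ω) [IsProbabilityMeasure P]
    (K : ℕ) (hK : 0 < K)
    -- rewards: `X j s` is the reward obtained from the `(s+1)`-th pull of arm `j`
    (X : Fin K → ℕ → Ω → ℝ) (μ : Fin K → ℝ)
    (hXmeas : ∀ j s, Measurable (X j s))
    (hXrange : ∀ j s ω, X j s ω ∈ Set.Icc (0 : ℝ) 1)
    (hXindep : iIndepFun
      (fun js : Fin K × ℕ => X js.1 js.2) P)
    (hXid : ∀ j s, P.map (X j s) = P.map (X j 0))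
    (hμ : ∀ j, μ j = ∫ ω, X j 0 ω ∂P)
    -- policy: `I t ω` is the arm played at round `t` (rounds are 1-indexed)
    (I : ℕ → Ω → Fin K) (hImeas : ∀ t, Measurable (I t))
    -- `N j t ω` : number of times arm `j` is played in rounds `1, …, t`
    (N : Fin K → ℕ → Ω → ℕ)
    (hN : ∀ j t ω, N j t ω = ((Finset.Icc 1 t).filter fun s => I s ω = j).card)
    -- `xbar j t ω` : empirical mean of arm `j` before round `t`
    (xbar : Fin K → ℕ → Ω → ℝ)
    (hxbar : ∀ j t ω,
      xbar j t ω = (∑ s ∈ Finset.range (N j (t - 1) ω), X j s ω) / (N j (t - 1) ω))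
    -- UCB1 initialization: play each arm once in rounds `1, …, K`
    (hInit : ∀ t ω, 1 ≤ t → (ht : t ≤ K) → I t ω = ⟨t - 1, by omega⟩)
    -- UCB1 selection: afterwards play an arm maximizing the UCB index
    (hUCB : ∀ t ω, K < t → ∀ j : Fin K,
      xbar j t ω + Real.sqrt (2 * Real.log t / (N j (t - 1) ω)) ≤
        xbar (I t ω) t ω + Real.sqrt (2 * Real.log t / (N (I t ω) (t - 1) ω)))
    (μstar : ℝ) (hμstar : μstar = ⨆ j, μ j)
    (Δ : Fin K → ℝ) (hΔ : ∀ j, Δ j = μstar - μ j)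
    -- cumulative regret
    (R : ℕ → ℝ)
    (hR : ∀ n : ℕ, R n = n * μstar - ∑ t ∈ Finset.Icc 1 n, ∫ ω, μ (I t ω) ∂P) :
    (∀ n : ℕ, K ≤ n →
      R n ≤ ∑ j ∈ Finset.univ.filter (fun j : Fin K => 0 < Δ j),
        (8 * Real.log n / Δ j + (1 + Real.pi ^ 2 / 3) * Δ j)) ∧
    Tendsto (fun n : ℕ => R n / n) atTop (nhds 0) := by
  classical
  haveI : Nonempty (Fin K) := ⟨⟨0, hK⟩⟩
  -- identical means
  have hmean : ∀ j u, ∫ ω, X j u ω ∂P = μ j := by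
    intro j u
    have h1 : ∫ ω, X j u ω ∂P = ∫ x, x ∂(P.map (X j u)) :=
      (integral_map (hXmeas j u).aemeasurable measurable_id.aestronglyMeasurable).symm
    have h2 : ∫ x, x ∂(P.map (X j 0)) = ∫ ω, X j 0 ω ∂P :=
      integral_map (hXmeas j 0).aemeasurable measurable_id.aestronglyMeasurable
    rw [h1, hXid j u, h2, ← hμ j]
  have hμ0 : ∀ j, 0 ≤ μ j := fun j => (hμ j) ▸ integral_nonneg (fun ω => (hXrange j 0 ω).1)
  have hμ1 : ∀ j, μ j ≤ 1 := by
    intro j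
    rw [hμ j]
    calc ∫ ω, X j 0 ω ∂P ≤ ∫ _, (1:ℝ) ∂P := by
          apply integral_mono _ (integrable_const 1) fun ω => (hXrange j 0 ω).2
          exact ucb_integrable_of_bounded (hXmeas j 0) 1
            (fun ω => abs_le.2 ⟨by linarith [(hXrange j 0 ω).1], (hXrange j 0 ω).2⟩)
      _ = 1 := by simp
  obtain ⟨js, hjs⟩ : ∃ js : Fin K, ∀ i, μ i ≤ μ js := by
    obtain ⟨js, -, hjs⟩ := Finset.exists_max_image Finset.univ μ ⟨⟨0, hK⟩, Finset.mem_univ _⟩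
    exact ⟨js, fun i => hjs i (Finset.mem_univ i)⟩
  have hμs : μstar = μ js := by
    rw [hμstar]
    exact le_antisymm (ciSup_le hjs) (le_ciSup (Set.Finite.bddAbove (Set.finite_range μ)) js)
  have hΔ0 : ∀ j, 0 ≤ Δ j := fun j => by rw [hΔ, hμs]; linarith [hjs j]
  -- counting facts
  have hNle : ∀ (j : Fin K) t ω, N j t ω ≤ t := by
    intro j t ω
    rw [hN]
    calc ((Finset.Icc 1 t).filter fun s => I s ω = j).card
        ≤ (Finset.Icc 1 t).card := Finset.card_filter_le _ _
      _ = t := by rw [Nat.card_Icc]; omega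
  have hNmono : ∀ (j : Fin K) ω {t t' : ℕ}, t ≤ t' → N j t ω ≤ N j t' ω := by
    intro j ω t t' h
    rw [hN, hN]
    exact Finset.card_le_card (Finset.filter_subset_filter _
      (Finset.Icc_subset_Icc_right h))
  have hNK : ∀ (j : Fin K) ω, N j K ω = 1 := by
    intro j ω
    rw [hN]
    have : ((Finset.Icc 1 K).filter fun s => I s ω = j) = {(j:ℕ) + 1} := by
      ext s
      simp only [Finset.mem_filter, Finset.mem_Icc, Finset.mem_singleton]
      constructor
      · rintro ⟨⟨h1, h2⟩, h3⟩
        rw [hInit s ω h1 h2] at h3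
        have := congrArg Fin.val h3
        simp only at this
        omega
      · rintro rfl
        have hj : (j:ℕ) < K := j.isLt
        refine ⟨⟨by omega, by omega⟩, ?_⟩
        rw [hInit _ ω (by omega) (by omega)]
        apply Fin.ext
        simp
    rw [this, Finset.card_singleton]
  have hNsucc : ∀ (j : Fin K) t ω, 1 ≤ t → I t ω = j → N j t ω = N j (t-1) ω + 1 := by
    intro j t ω ht hI
    rw [hN, hN]
    have hins : Finset.Icc 1 t = insert t (Finset.Icc 1 (t-1)) := by
      ext s
      simp only [Finset.mem_Icc, Finset.mem_insert]
      omega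
    rw [hins, Finset.filter_insert, if_pos hI, Finset.card_insert_of_notMem]
    intro hmem
    have := Finset.mem_of_mem_filter t hmem
    simp only [Finset.mem_Icc] at this
    omega
  have hN1 : ∀ (j : Fin K) t ω, K ≤ t → 1 ≤ N j t ω := fun j t ω ht =>
    le_trans (by rw [hNK]) (hNmono j ω ht)
  -- measurability
  have hNmeasN : ∀ (j : Fin K) t, Measurable (fun ω => N j t ω) := by
    intro j t
    have : (fun ω => N j t ω)
        = fun ω => ∑ s ∈ Finset.Icc 1 t, if I s ω = j then 1 else 0 := by
      funext ω
      rw [hN, Finset.card_filter]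
    rw [this]
    apply Finset.measurable_sum
    intro s _
    exact Measurable.ite (hImeas s (measurableSet_singleton j)) measurable_const
      measurable_const
  have hNmeas : ∀ (j : Fin K) t, Measurable (fun ω => (N j t ω : ℝ)) := by
    intro j t
    exact measurable_from_top.comp (hNmeasN j t)
  have hNint : ∀ (j : Fin K) t, Integrable (fun ω => (N j t ω : ℝ)) P := by
    intro j t
    apply ucb_integrable_of_bounded (hNmeas j t) t
    intro ω
    rw [abs_of_nonneg (Nat.cast_nonneg _)]
    exact_mod_cast hNle j t ω
  -- regret identity
  have hμIint : ∀ t, Integrable (fun ω => μ (I t ω)) P := by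
    intro t
    apply ucb_integrable_of_bounded ((measurable_from_top).comp (hImeas t)) 1
    intro ω
    rw [abs_le]
    have h1 := hμ0 (I t ω); have h2 := hμ1 (I t ω)
    constructor
    · show -1 ≤ μ (I t ω)
      linarith
    · show μ (I t ω) ≤ 1
      linarith
  have hRid : ∀ n : ℕ, R n = ∑ j : Fin K, Δ j * ∫ ω, (N j n ω : ℝ) ∂P := by
    intro n
    have hcast : ∀ (j : Fin K) ω, (N j n ω : ℝ)
        = ∑ t ∈ Finset.Icc 1 n, if I t ω = j then (1:ℝ) else 0 := by
      intro j ω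
      rw [hN, Finset.card_filter]
      push_cast
      exact Finset.sum_congr rfl fun t _ => by split <;> norm_num
    have hpt : ∀ ω, ∑ t ∈ Finset.Icc 1 n, (μstar - μ (I t ω))
        = ∑ j : Fin K, Δ j * (N j n ω : ℝ) := by
      intro ω
      have h1 : ∀ t, μstar - μ (I t ω) = ∑ j : Fin K, if I t ω = j then Δ j else 0 := by
        intro t
        rw [Finset.sum_ite_eq (Finset.univ) (I t ω) Δ, if_pos (Finset.mem_univ _), hΔ]
      calc ∑ t ∈ Finset.Icc 1 n, (μstar - μ (I t ω))
          = ∑ t ∈ Finset.Icc 1 n, ∑ j : Fin K, (if I t ω = j then Δ j else 0) :=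
            Finset.sum_congr rfl fun t _ => h1 t
        _ = ∑ j : Fin K, ∑ t ∈ Finset.Icc 1 n, (if I t ω = j then Δ j else 0) :=
            Finset.sum_comm
        _ = ∑ j : Fin K, Δ j * (N j n ω : ℝ) := by
            apply Finset.sum_congr rfl
            intro j _
            rw [hcast j ω, Finset.mul_sum]
            exact Finset.sum_congr rfl fun t _ => by split <;> simp
    have hint1 : ∀ t, Integrable (fun ω => μstar - μ (I t ω)) P :=
      fun t => (integrable_const μstar).sub (hμIint t)
    calc R n = ∑ t ∈ Finset.Icc 1 n, (μstar - ∫ ω, μ (I t ω) ∂P) := by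
          rw [hR n, Finset.sum_sub_distrib, Finset.sum_const, Nat.card_Icc]
          simp [mul_comm]
      _ = ∑ t ∈ Finset.Icc 1 n, ∫ ω, (μstar - μ (I t ω)) ∂P := by
          apply Finset.sum_congr rfl
          intro t _
          rw [integral_sub (integrable_const μstar) (hμIint t), integral_const]
          simp
      _ = ∫ ω, ∑ t ∈ Finset.Icc 1 n, (μstar - μ (I t ω)) ∂P :=
          (integral_finset_sum _ fun t _ => hint1 t).symm
      _ = ∫ ω, ∑ j : Fin K, Δ j * (N j n ω : ℝ) ∂P := by
          apply integral_congr_ae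
          exact ae_of_all _ hpt
      _ = ∑ j : Fin K, Δ j * ∫ ω, (N j n ω : ℝ) ∂P := by
          rw [integral_finset_sum _ fun j _ => (hNint j n).const_mul (Δ j)]
          exact Finset.sum_congr rfl fun j _ => integral_const_mul _ _
  -- per-arm expectation bound
  have key : ∀ n : ℕ, K ≤ n → ∀ j : Fin K, 0 < Δ j →
      ∫ ω, (N j n ω : ℝ) ∂P ≤ ((max 1 ⌈8 * Real.log n / Δ j ^ 2⌉₊ : ℕ) : ℝ) + 2 := by
    intro n hn j hΔj
    set x : ℝ := 8 * Real.log n / Δ j ^ 2 with hxdef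
    set L : ℕ := max 1 ⌈x⌉₊ with hLdef
    have hL1 : 1 ≤ L := le_max_left _ _
    set c : ℕ → ℕ → ℝ := fun t s => Real.sqrt (2 * Real.log t / s) with hcdef
    have hc0 : ∀ t s, 0 ≤ c t s := fun t s => Real.sqrt_nonneg _
    set A : ℕ → ℕ → Set Ω := fun t s =>
      {ω | (s:ℝ) * ((1 - μstar) + c t s) ≤ ∑ u ∈ Finset.range s, (1 - X js u ω)} with hAdef
    set B : ℕ → ℕ → Set Ω := fun t s =>
      {ω | (s:ℝ) * (μ j + c t s) ≤ ∑ u ∈ Finset.range s, X j u ω} with hBdef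
    have hAmeas : ∀ t s, MeasurableSet (A t s) := by
      intro t s
      exact measurableSet_le measurable_const
        (Finset.measurable_sum _ fun u _ => measurable_const.sub (hXmeas js u))
    have hBmeas : ∀ t s, MeasurableSet (B t s) := by
      intro t s
      exact measurableSet_le measurable_const
        (Finset.measurable_sum _ fun u _ => hXmeas j u)
    -- probability bounds
    have hexp_eq : ∀ t s : ℕ, 2 ≤ t → 1 ≤ s →
        Real.exp (-(2 * s * (c t s) ^ 2)) = 1/(t:ℝ)^4 := by
      intro t s ht hs
      have htpos : (0:ℝ) < t := by positivity
      have hlogt : 0 ≤ Real.log t := Real.log_nonneg (by exact_mod_cast Nat.one_le_of_lt ht)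
      have hspos : (0:ℝ) < s := by exact_mod_cast hs
      have hsq : (c t s) ^ 2 = 2 * Real.log t / s := by
        rw [hcdef]
        exact Real.sq_sqrt (by positivity)
      rw [hsq]
      have h4 : 2 * (s:ℝ) * (2 * Real.log t / s) = (4:ℕ) * Real.log t := by
        field_simp; ring
      rw [h4, Real.exp_neg, Real.exp_nat_mul, Real.exp_log htpos]
      norm_num
    have hPA : ∀ t s : ℕ, 2 ≤ t → 1 ≤ s → (P (A t s)).toReal ≤ 1/(t:ℝ)^4 := by
      intro t s ht hs
      have hinj : Function.Injective (fun u : ℕ => ((js, u) : Fin K × ℕ)) :=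
        fun a b h => by simpa using congrArg Prod.snd h
      have h1 : iIndepFun (fun u => X js u) P :=
        ucb_iIndepFun_precomp hXindep hinj
      have hind : iIndepFun (fun u ω => 1 - X js u ω) P :=
        h1.comp (fun _ (x:ℝ) => 1 - x) (fun _ => measurable_const.sub measurable_id)
      have hmean' : ∀ u, ∫ ω, (1 - X js u ω) ∂P = 1 - μstar := by
        intro u
        have hXint : Integrable (fun ω => X js u ω) P :=
          ucb_integrable_of_bounded (hXmeas js u) 1
            (fun ω => abs_le.2 ⟨by linarith [(hXrange js u ω).1], (hXrange js u ω).2⟩)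
        rw [integral_sub (integrable_const 1) hXint, hmean js u, hμs]
        simp
      have h := ucb_hoeffding_tail P (fun u ω => 1 - X js u ω)
        (fun u => measurable_const.sub (hXmeas js u))
        (fun u ω => ⟨show (0:ℝ) ≤ 1 - X js u ω by linarith [(hXrange js u ω).2],
          show (1:ℝ) - X js u ω ≤ 1 by linarith [(hXrange js u ω).1]⟩)
        hind (1 - μstar) hmean' s (hc0 t s)
      rw [hexp_eq t s ht hs] at h
      exact h
    have hPB : ∀ t s : ℕ, 2 ≤ t → 1 ≤ s → (P (B t s)).toReal ≤ 1/(t:ℝ)^4 := by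
      intro t s ht hs
      have hinj : Function.Injective (fun u : ℕ => ((j, u) : Fin K × ℕ)) :=
        fun a b h => by simpa using congrArg Prod.snd h
      have h1 : iIndepFun (fun u => X j u) P :=
        ucb_iIndepFun_precomp hXindep hinj
      have h := ucb_hoeffding_tail P (fun u => X j u) (fun u => hXmeas j u)
        (fun u ω => hXrange j u ω) h1 (μ j) (fun u => hmean j u) s (hc0 t s)
      rw [hexp_eq t s ht hs] at h
      exact h
    -- pointwise selection claim
    have claim3 : ∀ t, K < t → t ≤ n → ∀ ω, I t ω = j → L ≤ N j (t-1) ω →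
        ∃ s0 ∈ Finset.Icc 1 (t-1), ω ∈ A t s0 ∨ ω ∈ B t s0 := by
      intro t htK htn ω hI hLN
      have ht2 : 2 ≤ t := by omega
      have hm1 : 1 ≤ N j (t-1) ω := hN1 j (t-1) ω (by omega)
      have hmt : N j (t-1) ω ≤ t - 1 := hNle j (t-1) ω
      have hms1 : 1 ≤ N js (t-1) ω := hN1 js (t-1) ω (by omega)
      have hmst : N js (t-1) ω ≤ t - 1 := hNle js (t-1) ω
      by_cases hA' : ω ∈ A t (N js (t-1) ω)
      · exact ⟨N js (t-1) ω, Finset.mem_Icc.2 ⟨hms1, hmst⟩, Or.inl hA'⟩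
      by_cases hB' : ω ∈ B t (N j (t-1) ω)
      · exact ⟨N j (t-1) ω, Finset.mem_Icc.2 ⟨hm1, hmt⟩, Or.inr hB'⟩
      exfalso
      have hmspos : (0:ℝ) < (N js (t-1) ω : ℝ) := by exact_mod_cast hms1
      have hmpos : (0:ℝ) < (N j (t-1) ω : ℝ) := by exact_mod_cast hm1
      -- from ¬A : xbar js t ω > μstar - c t ms
      have hAx : μstar - c t (N js (t-1) ω) < xbar js t ω := by
        simp only [hAdef, Set.mem_setOf_eq, not_le] at hA'
        rw [Finset.sum_sub_distrib, Finset.sum_const, Finset.card_range,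
          nsmul_eq_mul, mul_one] at hA'
        rw [hxbar js t ω, lt_div_iff₀ hmspos]
        nlinarith [hA']
      -- from ¬B : xbar j t ω < μ j + c t m
      have hBx : xbar j t ω < μ j + c t (N j (t-1) ω) := by
        simp only [hBdef, Set.mem_setOf_eq, not_le] at hB'
        rw [hxbar j t ω, div_lt_iff₀ hmpos]
        nlinarith [hB']
      -- UCB comparison
      have hucb := hUCB t ω htK js
      rw [hI] at hucb
      -- gap bound
      have hgap : 2 * c t (N j (t-1) ω) ≤ Δ j := by
        have hn2 : 2 ≤ n := by omega
        have hlogn : 0 < Real.log n := Real.log_pos (by exact_mod_cast hn2)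
        have hxpos : 0 < x := by rw [hxdef]; positivity
        have hmx : x ≤ (N j (t-1) ω : ℝ) := by
          calc x ≤ (⌈x⌉₊ : ℝ) := Nat.le_ceil x
            _ ≤ (L : ℝ) := by exact_mod_cast le_max_right _ _
            _ ≤ _ := by exact_mod_cast hLN
        have hlogt : Real.log t ≤ Real.log n := by
          apply Real.log_le_log (by positivity)
          exact_mod_cast htn
        have h1 : 2 * Real.log t / (N j (t-1) ω : ℝ) ≤ 2 * Real.log n / x := by
          apply div_le_div₀ (by positivity) (by linarith) hxpos hmx
        have h2 : 2 * Real.log n / x = Δ j ^ 2 / 4 := by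
          rw [hxdef]
          field_simp
          ring
        have h3 : c t (N j (t-1) ω) ≤ Δ j / 2 := by
          rw [hcdef]
          calc Real.sqrt (2 * Real.log t / (N j (t-1) ω : ℝ))
              ≤ Real.sqrt (Δ j ^ 2 / 4) := Real.sqrt_le_sqrt (by rw [← h2]; exact h1)
            _ = Δ j / 2 := by
                rw [show Δ j ^ 2 / 4 = (Δ j / 2) ^ 2 by ring]
                exact Real.sqrt_sq (by linarith)
        linarith
      have hceq : ∀ i : Fin K,
          Real.sqrt (2 * Real.log t / (N i (t-1) ω : ℝ)) = c t (N i (t-1) ω) := by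
        intro i; rw [hcdef]
      rw [hceq js, hceq j] at hucb
      rw [hΔ j, hμs] at hgap
      linarith [hAx, hBx, hucb, hgap]
    -- pointwise counting bound
    have hcount : ∀ ω, (N j n ω : ℝ) ≤ (L:ℝ) + ∑ t ∈ Finset.Ioc K n, ∑ s ∈ Finset.Icc 1 (t-1),
        ((A t s).indicator (fun _ => (1:ℝ)) ω + (B t s).indicator (fun _ => (1:ℝ)) ω) := by
      intro ω
      have hsplit : N j n ω = 1 + ((Finset.Ioc K n).filter fun t => I t ω = j).card := by
        rw [hN]
        have hun : Finset.Icc 1 n = Finset.Icc 1 K ∪ Finset.Ioc K n := by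
          ext a
          simp only [Finset.mem_Icc, Finset.mem_Ioc, Finset.mem_union]
          omega
        have hdisj : Disjoint (Finset.Icc 1 K) (Finset.Ioc K n) := by
          rw [Finset.disjoint_left]
          intro a ha hb
          simp only [Finset.mem_Icc] at ha
          simp only [Finset.mem_Ioc] at hb
          omega
        rw [hun, Finset.filter_union,
          Finset.card_union_of_disjoint (Finset.disjoint_filter_filter hdisj)]
        congr 1
        rw [← hN j K ω, hNK j ω]
      set T2 := (Finset.Ioc K n).filter (fun t => I t ω = j ∧ L ≤ N j (t-1) ω) with hT2def
      set T1 := (Finset.Ioc K n).filter (fun t => I t ω = j ∧ ¬ L ≤ N j (t-1) ω) with hT1def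
      have hsplit2 : ((Finset.Ioc K n).filter fun t => I t ω = j).card = T2.card + T1.card := by
        have h := Finset.card_filter_add_card_filter_not
          (s := (Finset.Ioc K n).filter fun t => I t ω = j) (fun t => L ≤ N j (t-1) ω)
        rw [Finset.filter_filter, Finset.filter_filter] at h
        rw [hT2def, hT1def]
        omega
      have hT1 : T1.card ≤ L - 1 := by
        have := Finset.card_le_card_of_injOn (s := T1) (t := Finset.Icc 1 (L-1))
          (fun t => N j (t-1) ω) ?_ ?_
        · simpa [Nat.card_Icc] using this
        · intro t ht
          simp only [hT1def, Finset.coe_filter, Set.mem_setOf_eq, Finset.mem_filter, Finset.mem_Ioc, not_le] at ht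
          simp only [Finset.coe_Icc, Set.mem_Icc, Finset.mem_Icc]
          have h1 : 1 ≤ N j (t-1) ω := hN1 j (t-1) ω (by omega)
          omega
        · intro a ha b hb hab
          simp only [hT1def, Finset.coe_filter, Set.mem_setOf_eq, Finset.mem_Ioc] at ha hb
          have hab2 : N j (a-1) ω = N j (b-1) ω := hab
          by_contra hne
          rcases Nat.lt_or_ge a b with h | h
          · have h2 : N j (a-1) ω + 1 ≤ N j (b-1) ω := by
              rw [← hNsucc j a ω (by omega) ha.2.1]
              exact hNmono j ω (by omega)
            omega
          · have h : b < a := by omega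
            have h2 : N j (b-1) ω + 1 ≤ N j (a-1) ω := by
              rw [← hNsucc j b ω (by omega) hb.2.1]
              exact hNmono j ω (by omega)
            omega
      have hT2 : (T2.card : ℝ) ≤ ∑ t ∈ Finset.Ioc K n, ∑ s ∈ Finset.Icc 1 (t-1),
          ((A t s).indicator (fun _ => (1:ℝ)) ω + (B t s).indicator (fun _ => (1:ℝ)) ω) := by
        rw [hT2def, Finset.card_filter]
        push_cast
        apply Finset.sum_le_sum
        intro t ht
        simp only [Finset.mem_Ioc] at ht
        have hnonneg : ∀ s ∈ Finset.Icc 1 (t-1),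
            0 ≤ (A t s).indicator (fun _ => (1:ℝ)) ω + (B t s).indicator (fun _ => (1:ℝ)) ω := by
          intro s _
          have := Set.indicator_nonneg (s := A t s) (f := fun _ => (1:ℝ))
            (fun _ _ => by norm_num) ω
          have := Set.indicator_nonneg (s := B t s) (f := fun _ => (1:ℝ))
            (fun _ _ => by norm_num) ω
          linarith
        by_cases hcond : I t ω = j ∧ L ≤ N j (t-1) ω
        · rw [if_pos hcond]
          obtain ⟨s0, hs0, hAB⟩ := claim3 t ht.1 ht.2 ω hcond.1 hcond.2
          calc (1:ℝ) ≤ (A t s0).indicator (fun _ => (1:ℝ)) ω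
                + (B t s0).indicator (fun _ => (1:ℝ)) ω := by
                rcases hAB with h | h
                · rw [Set.indicator_of_mem h]
                  have := Set.indicator_nonneg (s := B t s0) (f := fun _ => (1:ℝ))
                    (fun _ _ => by norm_num) ω
                  linarith
                · rw [Set.indicator_of_mem h]
                  have := Set.indicator_nonneg (s := A t s0) (f := fun _ => (1:ℝ))
                    (fun _ _ => by norm_num) ω
                  linarith
            _ ≤ _ := Finset.single_le_sum hnonneg hs0
        · rw [if_neg hcond]
          exact Finset.sum_nonneg hnonneg
      have hc1 : ((T1.card : ℕ) : ℝ) ≤ (L : ℝ) - 1 := by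
        have : ((L - 1 : ℕ) : ℝ) = (L:ℝ) - 1 := by
          push_cast [Nat.cast_sub hL1]
          ring
        rw [← this]
        exact_mod_cast hT1
      have hceq : (N j n ω : ℝ) = 1 + (T2.card : ℝ) + (T1.card : ℝ) := by
        rw [hsplit, hsplit2]
        push_cast
        ring
      rw [hceq]
      linarith [hT2, hc1]
    -- integrate
    have hIndInt : ∀ (S : Set Ω), MeasurableSet S →
        Integrable (S.indicator fun _ => (1:ℝ)) P :=
      fun S hS => (integrable_const 1).indicator hS
    have hEbound : ∫ ω, (N j n ω:ℝ) ∂P ≤ (L:ℝ) + ∑ t ∈ Finset.Ioc K n,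
        ∑ s ∈ Finset.Icc 1 (t-1), ((P (A t s)).toReal + (P (B t s)).toReal) := by
      have hRHSint : Integrable (fun ω => (L:ℝ) + ∑ t ∈ Finset.Ioc K n,
          ∑ s ∈ Finset.Icc 1 (t-1),
          ((A t s).indicator (fun _ => (1:ℝ)) ω + (B t s).indicator (fun _ => (1:ℝ)) ω)) P := by
        apply Integrable.add (integrable_const _)
        apply integrable_finset_sum
        intro t _
        apply integrable_finset_sum
        intro s _
        exact (hIndInt _ (hAmeas t s)).add (hIndInt _ (hBmeas t s))
      calc ∫ ω, (N j n ω:ℝ) ∂P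
          ≤ ∫ ω, ((L:ℝ) + ∑ t ∈ Finset.Ioc K n, ∑ s ∈ Finset.Icc 1 (t-1),
            ((A t s).indicator (fun _ => (1:ℝ)) ω + (B t s).indicator (fun _ => (1:ℝ)) ω)) ∂P :=
            integral_mono (hNint j n) hRHSint hcount
        _ = (L:ℝ) + ∑ t ∈ Finset.Ioc K n, ∑ s ∈ Finset.Icc 1 (t-1),
            ((P (A t s)).toReal + (P (B t s)).toReal) := by
            rw [integral_add (integrable_const _) (by
              apply integrable_finset_sum
              intro t _
              apply integrable_finset_sum
              intro s _
              exact (hIndInt _ (hAmeas t s)).add (hIndInt _ (hBmeas t s))), integral_const]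
            simp only [probReal_univ, ENNReal.toReal_one, smul_eq_mul, one_mul]
            congr 1
            rw [integral_finset_sum _ (fun t _ => by
              apply integrable_finset_sum
              intro s _
              exact (hIndInt _ (hAmeas t s)).add (hIndInt _ (hBmeas t s)))]
            apply Finset.sum_congr rfl
            intro t _
            rw [integral_finset_sum (Finset.Icc 1 (t-1))
              (f := fun s ω => (A t s).indicator (fun _ => (1:ℝ)) ω
                + (B t s).indicator (fun _ => (1:ℝ)) ω)
              (fun s _ => (hIndInt _ (hAmeas t s)).add (hIndInt _ (hBmeas t s)))]
            apply Finset.sum_congr rfl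
            intro s _
            rw [integral_add (hIndInt _ (hAmeas t s)) (hIndInt _ (hBmeas t s)),
              integral_indicator_const (1:ℝ) (hAmeas t s),
              integral_indicator_const (1:ℝ) (hBmeas t s)]
            simp [Measure.real]
    have htail : ∑ t ∈ Finset.Ioc K n, ∑ s ∈ Finset.Icc 1 (t-1),
        ((P (A t s)).toReal + (P (B t s)).toReal) ≤ 2 := by
      calc ∑ t ∈ Finset.Ioc K n, ∑ s ∈ Finset.Icc 1 (t-1),
          ((P (A t s)).toReal + (P (B t s)).toReal)
          ≤ ∑ t ∈ Finset.Ioc K n, ((t - 1 : ℕ) : ℝ) * (2 / (t:ℝ) ^ 4) := by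
            apply Finset.sum_le_sum
            intro t ht
            simp only [Finset.mem_Ioc] at ht
            have ht2 : 2 ≤ t := by omega
            calc ∑ s ∈ Finset.Icc 1 (t-1), ((P (A t s)).toReal + (P (B t s)).toReal)
                ≤ ∑ s ∈ Finset.Icc 1 (t-1), (2 / (t:ℝ)^4) := by
                  apply Finset.sum_le_sum
                  intro s hs
                  simp only [Finset.mem_Icc] at hs
                  have h1 := hPA t s ht2 hs.1
                  have h2 := hPB t s ht2 hs.1
                  have : 2 / (t:ℝ)^4 = 1/(t:ℝ)^4 + 1/(t:ℝ)^4 := by ring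
                  linarith
              _ = ((t - 1 : ℕ) : ℝ) * (2 / (t:ℝ) ^ 4) := by
                  rw [Finset.sum_const, Nat.card_Icc, nsmul_eq_mul]
                  norm_num
        _ ≤ 2 := ucb_tail_sum K n hK
    calc ∫ ω, (N j n ω:ℝ) ∂P ≤ (L:ℝ) + ∑ t ∈ Finset.Ioc K n, ∑ s ∈ Finset.Icc 1 (t-1),
          ((P (A t s)).toReal + (P (B t s)).toReal) := hEbound
      _ ≤ (L:ℝ) + 2 := by linarith [htail]
      _ = ((max 1 ⌈8 * Real.log n / Δ j ^ 2⌉₊ : ℕ) : ℝ) + 2 := by rw [hLdef, hxdef]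

  -- part 1
  have hpisq : (6:ℝ) ≤ Real.pi ^ 2 := by
    nlinarith [Real.pi_gt_three]
  have part1 : ∀ n : ℕ, K ≤ n →
      R n ≤ ∑ j ∈ Finset.univ.filter (fun j : Fin K => 0 < Δ j),
        (8 * Real.log n / Δ j + (1 + Real.pi ^ 2 / 3) * Δ j) := by
    intro n hn
    have hlogn : 0 ≤ Real.log n := Real.log_natCast_nonneg n
    have hdrop : R n = ∑ j ∈ Finset.univ.filter (fun j : Fin K => 0 < Δ j),
        Δ j * ∫ ω, (N j n ω : ℝ) ∂P := by
      rw [hRid n]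
      rw [Finset.sum_filter_of_ne]
      intro j _ hne
      by_contra hnot
      push_neg at hnot
      have h0 : Δ j = 0 := le_antisymm hnot (hΔ0 j)
      exact hne (by rw [h0, zero_mul])
    rw [hdrop]
    apply Finset.sum_le_sum
    intro j hj
    simp only [Finset.mem_filter] at hj
    have hΔj := hj.2
    have hkey := key n hn j hΔj
    have hL : ((max 1 ⌈8 * Real.log n / Δ j ^ 2⌉₊ : ℕ) : ℝ)
        ≤ 8 * Real.log n / Δ j ^ 2 + 1 := by
      have hx0 : 0 ≤ 8 * Real.log n / Δ j ^ 2 := by positivity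
      rw [Nat.cast_max]
      apply max_le
      · norm_num
        linarith
      · linarith [(Nat.ceil_lt_add_one hx0).le]
    have h1 : Δ j * ∫ ω, (N j n ω : ℝ) ∂P
        ≤ Δ j * (8 * Real.log n / Δ j ^ 2 + 3) := by
      apply mul_le_mul_of_nonneg_left _ hΔj.le
      linarith [hkey, hL]
    have h2 : Δ j * (8 * Real.log n / Δ j ^ 2 + 3)
        = 8 * Real.log n / Δ j + 3 * Δ j := by
      field_simp
    have h3 : 3 * Δ j ≤ (1 + Real.pi ^ 2 / 3) * Δ j := by
      apply mul_le_mul_of_nonneg_right _ hΔj.le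
      linarith
    linarith [h1, h2.le, h2.ge, h3]
  refine ⟨part1, ?_⟩
  -- part 2
  have hR0 : ∀ n : ℕ, 0 ≤ R n := by
    intro n
    rw [hRid n]
    apply Finset.sum_nonneg
    intro j _
    apply mul_nonneg (hΔ0 j)
    exact integral_nonneg fun ω => Nat.cast_nonneg _
  set Ca : ℝ := ∑ j ∈ Finset.univ.filter (fun j : Fin K => 0 < Δ j), 8 / Δ j with hCa
  set Cb : ℝ := ∑ j ∈ Finset.univ.filter (fun j : Fin K => 0 < Δ j),
    (1 + Real.pi ^ 2 / 3) * Δ j with hCb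
  have hCa0 : 0 ≤ Ca := by
    apply Finset.sum_nonneg
    intro j hj
    rcases Finset.mem_filter.1 hj with ⟨-, h⟩
    exact (div_pos (by norm_num) h).le
  have hupper : ∀ᶠ n : ℕ in atTop, R n / n ≤ Ca * (Real.log n / n) + Cb / n := by
    filter_upwards [eventually_ge_atTop (max K 1)] with n hn
    have hnK : K ≤ n := le_trans (le_max_left _ _) hn
    have hn1 : 1 ≤ n := le_trans (le_max_right _ _) hn
    have hnpos : (0:ℝ) < n := by exact_mod_cast hn1
    have hRb : R n ≤ Ca * Real.log n + Cb := by
      calc R n ≤ ∑ j ∈ Finset.univ.filter (fun j : Fin K => 0 < Δ j),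
          (8 * Real.log n / Δ j + (1 + Real.pi ^ 2 / 3) * Δ j) := part1 n hnK
        _ = Ca * Real.log n + Cb := by
          rw [hCa, hCb, Finset.sum_add_distrib, Finset.sum_mul]
          congr 1
          apply Finset.sum_congr rfl
          intro j _
          ring
    calc R n / n ≤ (Ca * Real.log n + Cb) / n := by
          exact div_le_div_of_nonneg_right hRb hnpos.le
      _ = Ca * (Real.log n / n) + Cb / n := by ring
  have htend : Tendsto (fun n : ℕ => Ca * (Real.log n / n) + Cb / n) atTop (nhds 0) := by
    have h1 : Tendsto (fun n : ℕ => Real.log n / n) atTop (nhds 0) := by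
      have h0 := Real.isLittleO_log_id_atTop.tendsto_div_nhds_zero
      have h2 := h0.comp (tendsto_natCast_atTop_atTop (R := ℝ))
      exact h2.congr (fun n => rfl)
    have h2 : Tendsto (fun n : ℕ => Cb / n) atTop (nhds 0) :=
      tendsto_const_div_atTop_nhds_zero_nat Cb
    have := ((h1.const_mul Ca).add h2)
    simpa using this
  apply squeeze_zero' ?_ hupper htend
  filter_upwards [eventually_ge_atTop 1] with n hn
  have hnpos : (0:ℝ) < n := by exact_mod_cast hn
  exact div_nonneg (hR0 n) hnpos.le
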